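/- Fix B > 0 and suppose the fraction of B-near-optimal arms satisfies |S_B|/K ≥ α > 0, where S_B = {a : √(n* Δ_a²/(2 log T)) ≤ B} and n* is the root of the characteristic equation. Then for every ε ∈ (0,1), f(n*(1+ε)) ≥ 1 + αε/((1+2B)²(1+B)²), where f(y) = ∑_{a=1}^K (√(T/y) + √(T Δ_a²/(2 log T)))^{-2}. -/

import Mathlib

open Real Finset

lemma key_ineq (u b B ε : ℝ) (hu0 : 0 < u) (hu1 : u < 1) (hu2 : 1 ≤ 2*u^2)
    (hb0 : 0 ≤ b) (hbB : b ≤ B) (hB : 0 < B) (hεu : ε * u^2 = 1 - u^2) :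
    ε / ((1+2*B)^2*(1+B)^2) ≤ (u+b)⁻¹^2 - (1+b)⁻¹^2 := by
  have hub : 0 < u + b := by linarith
  have h1b : 0 < 1 + b := by linarith
  have hD : (0:ℝ) < (1+2*B)^2*(1+B)^2 := by positivity
  have hrw : (u+b)⁻¹^2 - (1+b)⁻¹^2 = ((1+b)^2 - (u+b)^2) / ((u+b)^2*(1+b)^2) := by
    field_simp
  rw [hrw, div_le_div_iff₀ hD (by positivity)]
  have hu2' : (0:ℝ) < u^2 := by positivity
  rw [← mul_le_mul_iff_of_pos_right hu2']
  have hb2u : b ≤ 2*B*u := by nlinarith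
  have e1 : 1+u ≤ 1+u+2*b := by linarith
  have e2 : (u+b)^2 ≤ u^2*(1+2*B)^2 := by nlinarith
  have e3 : (1+b)^2 ≤ (1+B)^2 := by nlinarith
  have chain : (1+u)*((u+b)^2*(1+b)^2) ≤ (1+u+2*b)*((u^2*(1+2*B)^2)*(1+B)^2) :=
    mul_le_mul e1 (mul_le_mul e2 e3 (by positivity) (by positivity)) (by positivity) (by positivity)
  have h1u : (0:ℝ) ≤ 1 - u := by linarith
  have chain2 := mul_le_mul_of_nonneg_left chain h1u
  have hx : ε * ((u+b)^2*(1+b)^2) * u^2 = (1-u^2)*((u+b)^2*(1+b)^2) := by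
    rw [← hεu]; ring
  rw [hx]
  nlinarith [chain2]

set_option maxHeartbeats 1600000 in
/-- If at least an `α`-fraction of the arms are `B`-near-optimal, then
`f(n*(1+ε)) ≥ 1 + αε/((1+2B)²(1+B)²)` for every `ε ∈ (0,1)`. -/
theorem ucb_characteristic_lower_perturbation
    (T K : ℕ) (hK : 2 ≤ K) (hTK : K ≤ T)
    (Δ : ℕ → ℝ) (hΔ : ∀ a, 0 ≤ Δ a) (hΔ1 : Δ 0 = 0)
    (f : ℝ → ℝ)
    (hf : ∀ y, f y = ∑ a ∈ Finset.range K,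
      (Real.sqrt ((T : ℝ) / y) + Real.sqrt ((T : ℝ) * (Δ a) ^ 2 / (2 * Real.log T)))⁻¹ ^ 2)
    (nstar : ℝ) (hn_lb : (T : ℝ) / K ≤ nstar) (hn_ub : nstar ≤ T)
    (hnroot : f nstar = 1)
    (B : ℝ) (hB : 0 < B)
    (α : ℝ) (hα : 0 < α) (hα1 : α ≤ 1)
    (hSB : (α * K : ℝ) ≤
      ((Finset.range K).filter
        (fun a => Real.sqrt (nstar * (Δ a) ^ 2 / (2 * Real.log T)) ≤ B)).card)
    (ε : ℝ) (hε : 0 < ε) (hε1 : ε < 1) :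
    f (nstar * (1 + ε)) ≥ 1 + α * ε / ((1 + 2 * B) ^ 2 * (1 + B) ^ 2) := by
  have hK0 : (0:ℝ) < K := by exact_mod_cast Nat.lt_of_lt_of_le (by norm_num) hK
  have hT2 : 2 ≤ T := le_trans hK hTK
  have hT0 : (0:ℝ) < T := by exact_mod_cast Nat.lt_of_lt_of_le (by norm_num) hT2
  have hn0 : 0 < nstar := lt_of_lt_of_le (div_pos hT0 hK0) hn_lb
  have h1ε : (0:ℝ) < 1 + ε := by linarith
  -- abbreviations
  set c : ℕ → ℝ := fun a => Real.sqrt ((T:ℝ) * Δ a ^ 2 / (2 * Real.log T)) with hc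
  have hfc : ∀ y, f y = ∑ a ∈ Finset.range K,
      (Real.sqrt ((T:ℝ)/y) + c a)⁻¹ ^ 2 := hf
  set s := Real.sqrt ((T:ℝ)/nstar) with hs
  have hs0 : 0 < s := Real.sqrt_pos.mpr (div_pos hT0 hn0)
  set u := (Real.sqrt (1+ε))⁻¹ with hu
  have hlogpos : 0 < Real.log T := Real.log_pos (by exact_mod_cast Nat.lt_of_lt_of_le one_lt_two hT2)
  have hsq1 : 1 < Real.sqrt (1+ε) := by
    nlinarith [Real.sq_sqrt h1ε.le, Real.sqrt_nonneg (1+ε)]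
  have hu0 : 0 < u := inv_pos.mpr (by linarith)
  have hu1 : u < 1 := by
    rw [hu]; exact inv_lt_one_of_one_lt₀ hsq1
  have hu2sq : u^2 = (1+ε)⁻¹ := by
    rw [hu, inv_pow, Real.sq_sqrt h1ε.le]
  have hu2 : 1 ≤ 2*u^2 := by
    rw [hu2sq, ← div_eq_mul_inv, le_div_iff₀ h1ε]; linarith
  have hεu : ε * u^2 = 1 - u^2 := by
    rw [hu2sq]; field_simp; ring
  have hs' : Real.sqrt ((T:ℝ)/(nstar*(1+ε))) = s * u := by
    rw [hu, hs, ← Real.sqrt_inv, ← Real.sqrt_mul (by positivity)]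
    congr 1
    field_simp
  set D := (1+2*B)^2*(1+B)^2 with hD
  have hD0 : 0 < D := by positivity
  set S := (Finset.range K).filter
      (fun a => Real.sqrt (nstar * (Δ a) ^ 2 / (2 * Real.log T)) ≤ B) with hSdef
  rw [hfc, show Real.sqrt ((T:ℝ)/nstar) = s from hs.symm] at hnroot
  rw [hfc, hs']
  clear_value c s u
  -- per-arm gap on S
  have hgap : ∀ a ∈ S, ε/(K*D) ≤ (s*u + c a)⁻¹^2 - (s + c a)⁻¹^2 := by
    intro a ha
    have hqB := (Finset.mem_filter.mp ha).2
    set q := Real.sqrt (nstar * Δ a ^ 2 / (2 * Real.log T)) with hq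
    clear_value q
    have hq0 : 0 ≤ q := hq ▸ Real.sqrt_nonneg _
    have hca : c a = s * q := by
      rw [hc, hq, hs, ← Real.sqrt_mul (by positivity)]
      congr 1
      field_simp [hn0.ne', hlogpos.ne']
    have hkey := key_ineq u q B ε hu0 hu1 hu2 hq0 hqB hB hεu
    have hsinv : (1:ℝ)/K ≤ s⁻¹^2 := by
      rw [hs, ← Real.sqrt_inv, Real.sq_sqrt (by positivity), inv_div,
        div_le_div_iff₀ hK0 hT0]
      rw [div_le_iff₀ hK0] at hn_lb
      linarith
    have hεD : (0:ℝ) ≤ ε/D := by positivity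
    calc ε/(K*D) = (1/K)*(ε/D) := by field_simp
      _ ≤ s⁻¹^2 * ((u+q)⁻¹^2 - (1+q)⁻¹^2) := mul_le_mul hsinv hkey hεD (by positivity)
      _ = (s*u + c a)⁻¹^2 - (s + c a)⁻¹^2 := by
          rw [hca, show s*u + s*q = s*(u+q) by ring, show s + s*q = s*(1+q) by ring,
            mul_inv, mul_inv, mul_pow, mul_pow]
          ring
  -- monotonicity for all arms
  have hmono : ∀ a ∈ Finset.range K, (s + c a)⁻¹^2 ≤ (s*u + c a)⁻¹^2 := by
    intro a _
    have hca0 : 0 ≤ c a := by rw [hc]; exact Real.sqrt_nonneg _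
    have h2 : 0 < s*u + c a := by positivity
    have h1 : s*u + c a ≤ s + c a := by nlinarith
    have h3 : (s + c a)⁻¹ ≤ (s*u + c a)⁻¹ := inv_anti₀ h2 h1
    exact pow_le_pow_left₀ (by positivity) h3 2
  -- combine
  have hsub : S ⊆ Finset.range K := Finset.filter_subset _ _
  have step1 : ∑ _a ∈ S, (ε/(K*D)) ≤ ∑ a ∈ S, ((s*u + c a)⁻¹^2 - (s + c a)⁻¹^2) :=
    Finset.sum_le_sum hgap
  have step2 : ∑ a ∈ S, ((s*u + c a)⁻¹^2 - (s + c a)⁻¹^2)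
      ≤ ∑ a ∈ Finset.range K, ((s*u + c a)⁻¹^2 - (s + c a)⁻¹^2) :=
    Finset.sum_le_sum_of_subset_of_nonneg hsub
      (fun a ha _ => sub_nonneg.mpr (hmono a ha))
  have hsum : ∑ a ∈ Finset.range K, ((s*u + c a)⁻¹^2 - (s + c a)⁻¹^2)
      = (∑ a ∈ Finset.range K, (s*u + c a)⁻¹^2) - 1 := by
    rw [Finset.sum_sub_distrib, hnroot]
  have hcardS : ∑ _a ∈ S, (ε/(K*D)) = (S.card:ℝ) * (ε/(K*D)) := by
    rw [Finset.sum_const, nsmul_eq_mul]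
  have hfinal : α*ε/D ≤ (S.card:ℝ)*(ε/(K*D)) := by
    have hmul : α*K*(ε/(K*D)) ≤ (S.card:ℝ)*(ε/(K*D)) :=
      mul_le_mul_of_nonneg_right hSB (by positivity)
    calc α*ε/D = α*K*(ε/(K*D)) := by field_simp
      _ ≤ _ := hmul
  have : 1 + α*ε/D ≤ ∑ a ∈ Finset.range K, (s*u + c a)⁻¹^2 := by
    rw [hcardS] at step1
    linarith
  exact this
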